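/- Let 𝒜 be an ultra-amenable Banach algebra. Then the Banach algebra AP(𝒜')' is amenable, where AP(𝒜')' denotes the dual of the space of almost periodic functionals, equipped with the product induced from the Arens product on 𝒜'' via the (surjective) restriction map 𝒜'' → AP(𝒜')'. -/

import Mathlib

set_option maxSynthPendingDepth 3
set_option maxHeartbeats 1000000
set_option synthInstance.maxHeartbeats 1000000

noncomputable section

open Filter Metric Topology ContinuousLinearMap
open scoped ENNReal

universe u v w y

namespace UPaper

/-- The (topological) dual of a complex normed space. -/
abbrev Dl (E : Type u) [NormedAddCommGroup E] [NormedSpace ℂ E] : Type u := E →L[ℂ] ℂ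

/-- An ultrafilter is countably incomplete when it contains a decreasing sequence of
sets with empty intersection. -/
def CountablyIncomplete {I : Type u} (𝒰 : Ultrafilter I) : Prop :=
  ∃ U : ℕ → Set I, (∀ n, U n ∈ 𝒰) ∧ (∀ n, U (n + 1) ⊆ U n) ∧ (⋂ n, U n) = (∅ : Set I)

/-- `π` realises `F` as the ultrapower `(E)_𝒰` of the Banach space `E` along the
ultrafilter `𝒰`: it is a linear surjection from `ℓ^∞(E,I)` onto `F` such that
`‖π x‖ = lim_𝒰 ‖x_i‖`.  This forces the kernel of `π` to be exactly the closed subspace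
`𝒩_𝒰` of families with `lim_𝒰 ‖x_i‖ = 0`, so that `F` is isometrically isomorphic to the
quotient `ℓ^∞(E,I)/𝒩_𝒰`, i.e. to the Banach space ultrapower `(E)_𝒰`. -/
def IsUltrapower {I : Type u} (𝒰 : Ultrafilter I) {E : Type v} {F : Type w}
    [NormedAddCommGroup E] [NormedSpace ℂ E] [NormedAddCommGroup F] [NormedSpace ℂ F]
    (π : lp (fun _ : I => E) ∞ →ₗ[ℂ] F) : Prop :=
  Function.Surjective π ∧
    ∀ x : lp (fun _ : I => E) ∞, Tendsto (fun i => ‖x i‖) (𝒰 : Filter I) (nhds ‖π x‖)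

/-- `π` realises `B` as the ultrapower `(A)_𝒰` of the Banach algebra `A` along `𝒰`:
in addition to being a Banach space ultrapower, `π` respects the coordinatewise
product on `ℓ^∞(A,I)`. -/
def IsUltrapowerAlg {I : Type u} (𝒰 : Ultrafilter I) {A : Type v} {B : Type w}
    [NonUnitalNormedRing A] [NormedSpace ℂ A] [IsScalarTower ℂ A A] [SMulCommClass ℂ A A]
    [NonUnitalNormedRing B] [NormedSpace ℂ B]
    (π : lp (fun _ : I => A) ∞ →ₗ[ℂ] B) : Prop :=
  IsUltrapower 𝒰 π ∧ ∀ x y : lp (fun _ : I => A) ∞, π (x * y) = π x * π y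

section Arens

variable {E : Type u} [NormedAddCommGroup E] [NormedSpace ℂ E]

/-- The right action of an algebra `(E, m)` on its dual:
`rAct m a μ = μ · a`, i.e. `⟨μ·a, b⟩ = ⟨μ, ab⟩`. -/
def rAct (m : E →L[ℂ] E →L[ℂ] E) : E →L[ℂ] Dl E →L[ℂ] Dl E :=
  (compL ℂ E E ℂ).flip.comp m

/-- The left action of an algebra `(E, m)` on its dual:
`lAct m a μ = a · μ`, i.e. `⟨a·μ, b⟩ = ⟨μ, ba⟩`. -/
def lAct (m : E →L[ℂ] E →L[ℂ] E) : E →L[ℂ] Dl E →L[ℂ] Dl E :=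
  (compL ℂ E E ℂ).flip.comp m.flip

/-- `arAct m Ψ μ = Ψ · μ`, i.e. `⟨Ψ·μ, a⟩ = ⟨Ψ, μ·a⟩`. -/
def arAct (m : E →L[ℂ] E →L[ℂ] E) : Dl (Dl E) →L[ℂ] Dl E →L[ℂ] Dl E :=
  letI T1 : ((E →L[ℂ] Dl E) →L[ℂ] Dl E) →L[ℂ] (Dl E →L[ℂ] Dl E) :=
    (compL ℂ (Dl E) (E →L[ℂ] Dl E) (Dl E)).flip ((rAct m).flip)
  letI T2 : Dl (Dl E) →L[ℂ] ((E →L[ℂ] Dl E) →L[ℂ] Dl E) := compL ℂ E (Dl E) ℂ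
  T1.comp T2

/-- `brAct m Φ μ = μ · Φ`, i.e. `⟨μ·Φ, a⟩ = ⟨Φ, a·μ⟩`. -/
def brAct (m : E →L[ℂ] E →L[ℂ] E) : Dl (Dl E) →L[ℂ] Dl E →L[ℂ] Dl E :=
  letI T1 : ((E →L[ℂ] Dl E) →L[ℂ] Dl E) →L[ℂ] (Dl E →L[ℂ] Dl E) :=
    (compL ℂ (Dl E) (E →L[ℂ] Dl E) (Dl E)).flip ((lAct m).flip)
  letI T2 : Dl (Dl E) →L[ℂ] ((E →L[ℂ] Dl E) →L[ℂ] Dl E) := compL ℂ E (Dl E) ℂ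
  T1.comp T2

/-- The first Arens product on the bidual: `⟨Φ □ Ψ, μ⟩ = ⟨Φ, Ψ·μ⟩`. -/
def arensMul1 (m : E →L[ℂ] E →L[ℂ] E) : Dl (Dl E) →L[ℂ] Dl (Dl E) →L[ℂ] Dl (Dl E) :=
  ((compL ℂ (Dl E) (Dl E) ℂ).flip.comp (arAct m)).flip

/-- The second Arens product on the bidual: `⟨Φ ◇ Ψ, μ⟩ = ⟨Ψ, μ·Φ⟩`. -/
def arensMul2 (m : E →L[ℂ] E →L[ℂ] E) : Dl (Dl E) →L[ℂ] Dl (Dl E) →L[ℂ] Dl (Dl E) :=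
  (compL ℂ (Dl E) (Dl E) ℂ).flip.comp (brAct m)

/-- Sanity check: the above maps are given by their correct defining formulas. -/
theorem arens_apply (m : E →L[ℂ] E →L[ℂ] E) (Φ Ψ : Dl (Dl E)) (μ : Dl E) (a b : E) :
    rAct m a μ b = μ (m a b) ∧ lAct m a μ b = μ (m b a) ∧
    arAct m Ψ μ a = Ψ (rAct m a μ) ∧ brAct m Φ μ a = Φ (lAct m a μ) ∧
    arensMul1 m Φ Ψ μ = Φ (arAct m Ψ μ) ∧ arensMul2 m Φ Ψ μ = Ψ (brAct m Φ μ) :=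
  ⟨by simp [rAct], by simp [lAct], by simp [arAct], by simp [brAct],
    by simp [arensMul1, arAct], by simp [arensMul2, brAct]⟩

/-- The algebra `(E, m)` is Arens regular: its two Arens products coincide. -/
def ArensRegularWith (m : E →L[ℂ] E →L[ℂ] E) : Prop :=
  ∀ Φ Ψ : Dl (Dl E), arensMul1 m Φ Ψ = arensMul2 m Φ Ψ

/-- `μ` is a weakly almost periodic functional on the algebra `(E, m)`: the orbit map
`a ↦ a·μ` is a weakly compact operator `E → E'`, i.e. the image of the closed unit ball
is relatively compact for the weak topology of `E'`. -/
def IsWAP (m : E →L[ℂ] E →L[ℂ] E) (μ : Dl E) : Prop :=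
  IsCompact (closure ((toWeakSpace ℂ (Dl E)) '' ((fun a => lAct m a μ) '' closedBall (0 : E) 1)))

/-- `μ` is an almost periodic functional on the algebra `(E, m)`: the orbit map
`a ↦ a·μ` is a compact operator `E → E'`. -/
def IsAP (m : E →L[ℂ] E →L[ℂ] E) (μ : Dl E) : Prop :=
  IsCompact (closure ((fun a => lAct m a μ) '' closedBall (0 : E) 1))

end Arens

/-- A Banach algebra is Arens regular when its two Arens products coincide. -/
def ArensRegular (A : Type u) [NonUnitalNormedRing A] [NormedSpace ℂ A]
    [IsScalarTower ℂ A A] [SMulCommClass ℂ A A] : Prop :=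
  ArensRegularWith (ContinuousLinearMap.mul ℂ A)

section Amenability

variable {A : Type u} [NormedAddCommGroup A] [NormedSpace ℂ A]

/-- `L`, `R` are commuting bounded left and right actions of the algebra `(A, m)` on the
Banach space `X`, making `X` a Banach `A`-bimodule; `L a x = a · x` and `R a x = x · a`. -/
def IsBimoduleWith (m : A →L[ℂ] A →L[ℂ] A) {X : Type v}
    [NormedAddCommGroup X] [NormedSpace ℂ X] (L R : A →L[ℂ] X →L[ℂ] X) : Prop :=
  (∀ a b x, L (m a b) x = L a (L b x)) ∧
  (∀ a b x, R (m a b) x = R b (R a x)) ∧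
  (∀ a b x, L a (R b x) = R b (L a x))

/-- The algebra `(A, m)` is amenable: for every Banach `A`-bimodule `X`, every continuous
derivation from `A` into the dual module `X'` is inner.  On the dual module the actions
are `a·λ = λ ∘ R a` and `λ·a = λ ∘ L a`; a derivation satisfies `D(ab) = a·D(b) + D(a)·b`,
and it is inner when `D a = a·λ − λ·a` for some `λ ∈ X'`. -/
def AmenableWith (m : A →L[ℂ] A →L[ℂ] A) : Prop :=
  ∀ (X : Type v) [NormedAddCommGroup X] [NormedSpace ℂ X] [CompleteSpace X],
    ∀ L R : A →L[ℂ] X →L[ℂ] X, IsBimoduleWith m L R →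
      ∀ D : A →L[ℂ] (X →L[ℂ] ℂ),
        (∀ a b, D (m a b) = (D b).comp (R a) + (D a).comp (L b)) →
        ∃ lam : X →L[ℂ] ℂ, ∀ a, D a = lam.comp (R a) - lam.comp (L a)

end Amenability

/-- A Banach algebra is amenable: every continuous derivation into the dual of a
Banach bimodule is inner. -/
def Amenable (A : Type u) [NonUnitalNormedRing A] [NormedSpace ℂ A]
    [IsScalarTower ℂ A A] [SMulCommClass ℂ A A] : Prop :=
  AmenableWith.{u, u} (ContinuousLinearMap.mul ℂ A)

/-- A Banach algebra is ultra-amenable: every ultrapower of it is amenable. -/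
def UltraAmenable (A : Type u) [NonUnitalNormedRing A] [NormedSpace ℂ A]
    [IsScalarTower ℂ A A] [SMulCommClass ℂ A A] : Prop :=
  ∀ (I : Type u) (𝒰 : Ultrafilter I) (B : Type u)
    [NonUnitalNormedRing B] [NormedSpace ℂ B] [IsScalarTower ℂ B B] [SMulCommClass ℂ B B]
    [CompleteSpace B] (π : lp (fun _ : I => A) ∞ →ₗ[ℂ] B),
      IsUltrapowerAlg 𝒰 π → Amenable B


set_option linter.unusedSectionVars false
set_option linter.unnecessarySimpa false

section Ulim
variable {I : Type u} (𝒰 : Ultrafilter I) {E : Type v} [NormedAddCommGroup E]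

noncomputable def ulim (g : I → E) : E := @limUnder _ _ _ ⟨0⟩ (𝒰 : Filter I) g

theorem ulim_eq {g : I → E} {c : E} (h : Tendsto g (𝒰 : Filter I) (𝓝 c)) :
    ulim 𝒰 g = c := h.limUnder_eq

theorem tendsto_ulim [ProperSpace E] {g : I → E} (h : ∃ C, ∀ i, ‖g i‖ ≤ C) :
    Tendsto g (𝒰 : Filter I) (𝓝 (ulim 𝒰 g)) := by
  obtain ⟨C, hC⟩ := h
  have hle : (𝒰.map g : Filter E) ≤ 𝓟 (closedBall 0 C) := by
    simp only [le_principal_iff, Ultrafilter.mem_coe, Ultrafilter.mem_map]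
    exact 𝒰.toFilter.mem_of_superset univ_mem (fun i _ => by
      simpa [mem_closedBall, dist_zero_right] using hC i)
  obtain ⟨a, -, ha⟩ := (isCompact_closedBall (0 : E) C).ultrafilter_le_nhds (𝒰.map g) hle
  have : Tendsto g (𝒰 : Filter I) (𝓝 a) := ha
  rw [ulim_eq 𝒰 this]; exact this
end Ulim

section Ultrapower

variable {I : Type u} (𝒰 : Ultrafilter I) (A : Type v)
  [NonUnitalNormedRing A] [NormedSpace ℂ A] [IsScalarTower ℂ A A] [SMulCommClass ℂ A A]

/-- The families tending to zero along the ultrafilter. -/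
def NU : Submodule ℂ (lp (fun _ : I => A) ∞) where
  carrier := {x | Tendsto (fun i => ‖x i‖) (𝒰 : Filter I) (𝓝 0)}
  zero_mem' := by
    simpa [lp.coeFn_zero, Pi.zero_apply] using
      (tendsto_const_nhds : Tendsto (fun _ : I => (0 : ℝ)) 𝒰 (𝓝 0))
  add_mem' {x y} hx hy := by
    have h1 : Tendsto (fun i => ‖x i‖ + ‖y i‖) (𝒰 : Filter I) (𝓝 0) := by
      simpa using hx.add hy
    refine squeeze_zero (fun i => norm_nonneg _) (fun i => ?_) h1
    simpa [lp.coeFn_add, Pi.add_apply] using norm_add_le (x i) (y i)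
  smul_mem' c x hx := by
    have h1 : Tendsto (fun i => ‖c‖ * ‖x i‖) (𝒰 : Filter I) (𝓝 0) := by
      simpa using hx.const_mul ‖c‖
    refine h1.congr (fun i => ?_)
    simp [lp.coeFn_smul, Pi.smul_apply, norm_smul]

theorem NU_mem_iff {x : lp (fun _ : I => A) ∞} :
    x ∈ NU 𝒰 A ↔ Tendsto (fun i => ‖x i‖) (𝒰 : Filter I) (𝓝 0) := Iff.rfl

instance NU_closed : IsClosed ((NU 𝒰 A : Set (lp (fun _ : I => A) ∞))) := by
  rw [← closure_subset_iff_isClosed]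
  intro x hx
  rw [SetLike.mem_coe, NU_mem_iff, NormedAddCommGroup.tendsto_nhds_zero]
  intro ε hε
  obtain ⟨y, hy, hxy⟩ := Metric.mem_closure_iff.1 hx (ε / 2) (by linarith)
  have hyt : Tendsto (fun i => ‖y i‖) (𝒰 : Filter I) (𝓝 0) := hy
  have h2 := (NormedAddCommGroup.tendsto_nhds_zero.1 hyt) (ε / 2) (by linarith)
  filter_upwards [h2] with i hi
  have hb : ‖x i - y i‖ ≤ ‖x - y‖ := by
    simpa [lp.coeFn_sub, Pi.sub_apply] using
      lp.norm_apply_le_norm ENNReal.top_ne_zero (x - y) i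
  have : ‖x i‖ ≤ ‖x i - y i‖ + ‖y i‖ := by
    simpa using norm_add_le (x i - y i) (y i)
  have hxynorm : ‖x - y‖ < ε / 2 := by rwa [dist_eq_norm] at hxy
  have : ‖x i‖ < ε := by
    calc ‖x i‖ ≤ ‖x i - y i‖ + ‖y i‖ := this
    _ ≤ ‖x - y‖ + ‖y i‖ := by linarith [hb]
    _ < ε / 2 + ε / 2 := by rw [Real.norm_eq_abs, abs_of_nonneg (norm_nonneg _)] at hi; linarith
    _ = ε := by ring
  simpa [Real.norm_eq_abs, abs_of_nonneg (norm_nonneg (x i))] using this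

/-- The ultrapower as a quotient. -/
def UP : Type (max u v) := lp (fun _ : I => A) ∞ ⧸ NU 𝒰 A

noncomputable instance : NormedAddCommGroup (UP 𝒰 A) :=
  inferInstanceAs (NormedAddCommGroup (lp (fun _ : I => A) ∞ ⧸ NU 𝒰 A))

noncomputable instance : NormedSpace ℂ (UP 𝒰 A) :=
  inferInstanceAs (NormedSpace ℂ (lp (fun _ : I => A) ∞ ⧸ NU 𝒰 A))

instance [CompleteSpace A] : CompleteSpace (UP 𝒰 A) :=
  inferInstanceAs (CompleteSpace (lp (fun _ : I => A) ∞ ⧸ NU 𝒰 A))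

/-- The quotient map onto the ultrapower. -/
noncomputable def UPmk : lp (fun _ : I => A) ∞ →ₗ[ℂ] UP 𝒰 A := (NU 𝒰 A).mkQ

theorem UPmk_surjective : Function.Surjective (UPmk 𝒰 A) :=
  Submodule.mkQ_surjective _

theorem UPmk_eq_iff {x y : lp (fun _ : I => A) ∞} :
    UPmk 𝒰 A x = UPmk 𝒰 A y ↔ x - y ∈ NU 𝒰 A := by
  constructor
  · intro h
    exact (Submodule.Quotient.eq _).1 h
  · intro h
    exact (Submodule.Quotient.eq _).2 h

theorem UP_norm_tendsto (x : lp (fun _ : I => A) ∞) :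
    Tendsto (fun i => ‖x i‖) (𝒰 : Filter I) (𝓝 ‖UPmk 𝒰 A x‖) := by
  have hbd : ∃ C, ∀ i, ‖(‖x i‖)‖ ≤ C :=
    ⟨‖x‖, fun i => by
      simpa [Real.norm_eq_abs, abs_of_nonneg (norm_nonneg _)] using
        lp.norm_apply_le_norm ENNReal.top_ne_zero x i⟩
  set c : ℝ := ulim 𝒰 (fun i => ‖x i‖) with hc
  have htc : Tendsto (fun i => ‖x i‖) (𝒰 : Filter I) (𝓝 c) := tendsto_ulim 𝒰 hbd
  have hc0 : 0 ≤ c := ge_of_tendsto htc (Eventually.of_forall fun i => norm_nonneg _)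
  suffices h : ‖UPmk 𝒰 A x‖ = c by rwa [h]
  apply le_antisymm
  · -- ‖mk x‖ ≤ c
    refine le_of_forall_pos_le_add (fun ε hε => ?_)
    have hcε : 0 < c + ε := by linarith
    set t : I → ℝ := fun i => (c + ε) / max (c + ε) ‖x i‖ with ht
    have hmaxpos : ∀ i, 0 < max (c + ε) ‖x i‖ := fun i => lt_of_lt_of_le hcε (le_max_left _ _)
    have ht0 : ∀ i, 0 ≤ t i := fun i => div_nonneg hcε.le (hmaxpos i).le
    have ht1 : ∀ i, t i ≤ 1 := fun i => by
      rw [div_le_one (hmaxpos i)]; exact le_max_left _ _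
    set y : ∀ _ : I, A := fun i => (t i : ℝ) • x i with hy
    have hynorm : ∀ i, ‖y i‖ ≤ c + ε := fun i => by
      rw [hy]
      simp only [norm_smul, Real.norm_eq_abs, abs_of_nonneg (ht0 i)]
      calc t i * ‖x i‖ ≤ t i * max (c + ε) ‖x i‖ :=
            mul_le_mul_of_nonneg_left (le_max_right _ _) (ht0 i)
        _ = c + ε := by rw [ht]; field_simp
    have hmem : Memℓp y ∞ := memℓp_infty ⟨c + ε, by rintro - ⟨i, rfl⟩; exact hynorm i⟩
    set Y : lp (fun _ : I => A) ∞ := ⟨y, hmem⟩ with hY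
    have hYnorm : ‖Y‖ ≤ c + ε := lp.norm_le_of_forall_le hcε.le hynorm
    have hev : ∀ᶠ i in (𝒰 : Filter I), ‖x i‖ < c + ε :=
      htc.eventually_lt_const (by linarith)
    have hxY : x - Y ∈ NU 𝒰 A := by
      rw [NU_mem_iff]
      refine Tendsto.congr' ?_ (tendsto_const_nhds : Tendsto (fun _ : I => (0:ℝ)) _ _)
      filter_upwards [hev] with i hi
      have hmax : max (c + ε) ‖x i‖ = c + ε := max_eq_left hi.le
      have hti : t i = 1 := by rw [ht]; simp only [hmax]; exact div_self hcε.ne'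
      have : (x - Y) i = x i - y i := by simp [lp.coeFn_sub, Pi.sub_apply, hY]; rfl
      rw [this, hy]
      simp [hti]
    have hmkeq : UPmk 𝒰 A x = UPmk 𝒰 A Y := (UPmk_eq_iff 𝒰 A).2 hxY
    calc ‖UPmk 𝒰 A x‖ = ‖UPmk 𝒰 A Y‖ := by rw [hmkeq]
      _ ≤ ‖Y‖ := Submodule.Quotient.norm_mk_le _ _
      _ ≤ c + ε := hYnorm
  · -- c ≤ ‖mk x‖
    refine le_of_forall_pos_le_add (fun ε hε => ?_)
    obtain ⟨m, hm, hmn⟩ := Submodule.Quotient.norm_mk_lt (UPmk 𝒰 A x) hε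
    have hxm : x - m ∈ NU 𝒰 A := by
      rw [← UPmk_eq_iff 𝒰 A]
      exact (hm : UPmk 𝒰 A m = UPmk 𝒰 A x).symm ▸ rfl
    have h1 : Tendsto (fun i => ‖x i‖ - ‖(x - m) i‖) (𝒰 : Filter I) (𝓝 c) := by
      simpa using htc.sub (NU_mem_iff 𝒰 A |>.1 hxm)
    have h2 : c ≤ ‖m‖ := by
      refine le_of_tendsto h1 (Eventually.of_forall fun i => ?_)
      have hcoord : (x - m) i = x i - m i := by simp [lp.coeFn_sub, Pi.sub_apply]
      have : ‖x i‖ - ‖x i - m i‖ ≤ ‖m i‖ := by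
        have := norm_add_le (x i - m i) (m i)
        simp only [sub_add_cancel] at this
        linarith
      rw [hcoord]
      exact this.trans (lp.norm_apply_le_norm ENNReal.top_ne_zero m i)
    exact h2.trans hmn.le

theorem NU_mul_left (x : lp (fun _ : I => A) ∞) {n : lp (fun _ : I => A) ∞}
    (hn : n ∈ NU 𝒰 A) : x * n ∈ NU 𝒰 A := by
  rw [NU_mem_iff] at hn ⊢
  have h1 : Tendsto (fun i => ‖x‖ * ‖n i‖) (𝒰 : Filter I) (𝓝 0) := by
    simpa using hn.const_mul ‖x‖
  refine squeeze_zero (fun i => norm_nonneg _) (fun i => ?_) h1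
  have : (x * n) i = x i * n i := by rw [lp.infty_coeFn_mul]; rfl
  rw [this]
  exact (norm_mul_le _ _).trans
    (mul_le_mul_of_nonneg_right (lp.norm_apply_le_norm ENNReal.top_ne_zero x i) (norm_nonneg _))

theorem NU_mul_right (y : lp (fun _ : I => A) ∞) {n : lp (fun _ : I => A) ∞}
    (hn : n ∈ NU 𝒰 A) : n * y ∈ NU 𝒰 A := by
  rw [NU_mem_iff] at hn ⊢
  have h1 : Tendsto (fun i => ‖n i‖ * ‖y‖) (𝒰 : Filter I) (𝓝 0) := by
    simpa using hn.mul_const ‖y‖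
  refine squeeze_zero (fun i => norm_nonneg _) (fun i => ?_) h1
  have : (n * y) i = n i * y i := by rw [lp.infty_coeFn_mul]; rfl
  rw [this]
  exact (norm_mul_le _ _).trans
    (mul_le_mul_of_nonneg_left (lp.norm_apply_le_norm ENNReal.top_ne_zero y i) (norm_nonneg _))

noncomputable instance : Mul (UP 𝒰 A) :=
  ⟨fun u v => Quotient.liftOn₂' u v (fun x y => UPmk 𝒰 A (x * y)) (by
    intro x y x' y' hx hy
    have hx' : x - x' ∈ NU 𝒰 A := by
      rwa [Submodule.quotientRel_def] at hx
    have hy' : y - y' ∈ NU 𝒰 A := by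
      rwa [Submodule.quotientRel_def] at hy
    refine (UPmk_eq_iff 𝒰 A).2 ?_
    have : x * y - x' * y' = x * (y - y') + (x - x') * y' := by
      rw [mul_sub, sub_mul]; abel
    rw [this]
    exact (NU 𝒰 A).add_mem (NU_mul_left 𝒰 A x hy') (NU_mul_right 𝒰 A y' hx'))⟩

theorem UPmk_mul (x y : lp (fun _ : I => A) ∞) :
    UPmk 𝒰 A (x * y) = UPmk 𝒰 A x * UPmk 𝒰 A y := rfl

noncomputable instance : NonUnitalRing (UP 𝒰 A) :=
  Function.Surjective.nonUnitalRing (UPmk 𝒰 A) (UPmk_surjective 𝒰 A)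
    (map_zero _) (map_add _) (UPmk_mul 𝒰 A) (map_neg _) (map_sub _)
    (fun n x => map_nsmul ((NU 𝒰 A).mkQ).toAddMonoidHom n x)
    (fun n x => map_zsmul ((NU 𝒰 A).mkQ).toAddMonoidHom n x)

noncomputable instance : NonUnitalNormedRing (UP 𝒰 A) :=
  { (inferInstance : NormedAddCommGroup (UP 𝒰 A)),
    (inferInstance : NonUnitalRing (UP 𝒰 A)) with
    norm_mul_le := by
      intro u v
      obtain ⟨x, rfl⟩ := UPmk_surjective 𝒰 A u
      obtain ⟨y, rfl⟩ := UPmk_surjective 𝒰 A v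
      rw [← UPmk_mul]
      refine le_of_tendsto_of_tendsto' (UP_norm_tendsto 𝒰 A (x * y))
        ((UP_norm_tendsto 𝒰 A x).mul (UP_norm_tendsto 𝒰 A y)) (fun i => ?_)
      have : (x * y) i = x i * y i := by rw [lp.infty_coeFn_mul]; rfl
      rw [this]
      exact norm_mul_le _ _ }

instance : IsScalarTower ℂ (UP 𝒰 A) (UP 𝒰 A) := by
  constructor
  intro c u v
  obtain ⟨x, rfl⟩ := UPmk_surjective 𝒰 A u
  obtain ⟨y, rfl⟩ := UPmk_surjective 𝒰 A v
  simp only [smul_eq_mul]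
  have h1 : c • UPmk 𝒰 A x = UPmk 𝒰 A (c • x) := (map_smul _ _ _).symm
  rw [h1, ← UPmk_mul, ← UPmk_mul, ← map_smul]
  congr 1
  apply lp.ext
  funext i
  have h2 : ((c • x) * y) i = (c • x) i * y i := by rw [lp.infty_coeFn_mul]; rfl
  have h3 : (c • (x * y)) i = c • ((x * y) i) := by rw [lp.coeFn_smul]; rfl
  have h4 : (x * y) i = x i * y i := by rw [lp.infty_coeFn_mul]; rfl
  have h5 : (c • x) i = c • x i := by rw [lp.coeFn_smul]; rfl
  rw [h2, h3, h4, h5, smul_mul_assoc]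

instance : SMulCommClass ℂ (UP 𝒰 A) (UP 𝒰 A) := by
  constructor
  intro c u v
  obtain ⟨x, rfl⟩ := UPmk_surjective 𝒰 A u
  obtain ⟨y, rfl⟩ := UPmk_surjective 𝒰 A v
  simp only [smul_eq_mul]
  have h1 : c • UPmk 𝒰 A y = UPmk 𝒰 A (c • y) := (map_smul _ _ _).symm
  rw [h1, ← UPmk_mul, ← UPmk_mul, ← map_smul]
  congr 1
  apply lp.ext
  funext i
  have h2 : (x * (c • y)) i = x i * (c • y) i := by rw [lp.infty_coeFn_mul]; rfl
  have h3 : (c • (x * y)) i = c • ((x * y) i) := by rw [lp.coeFn_smul]; rfl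
  have h4 : (x * y) i = x i * y i := by rw [lp.infty_coeFn_mul]; rfl
  have h5 : (c • y) i = c • y i := by rw [lp.coeFn_smul]; rfl
  rw [h2, h3, h4, h5, mul_smul_comm]

noncomputable instance : Module ℂ (UP 𝒰 A) := NormedSpace.toModule

end Ultrapower

section Tsec

variable {I : Type u} (𝒰 : Ultrafilter I) (A : Type v)
  [NonUnitalNormedRing A] [NormedSpace ℂ A] [IsScalarTower ℂ A A] [SMulCommClass ℂ A A]

theorem eval_bdd (x : lp (fun _ : I => A) ∞) (μ : Dl A) : ∃ C, ∀ i, ‖μ (x i)‖ ≤ C :=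
  ⟨‖μ‖ * ‖x‖, fun i => (μ.le_opNorm _).trans (by
    gcongr
    exact lp.norm_apply_le_norm ENNReal.top_ne_zero x i)⟩

/-- The weak-star limit map `ℓ∞(A, I) → A''` along the ultrafilter. -/
noncomputable def Tfun (x : lp (fun _ : I => A) ∞) : Dl (Dl A) :=
  LinearMap.mkContinuous
    { toFun := fun μ : Dl A => ulim 𝒰 (fun i => μ (x i))
      map_add' := fun μ ν => by
        apply ulim_eq
        have h1 := tendsto_ulim 𝒰 (eval_bdd A x μ)
        have h2 := tendsto_ulim 𝒰 (eval_bdd A x ν)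
        simpa using h1.add h2
      map_smul' := fun c μ => by
        apply ulim_eq
        have h1 := tendsto_ulim 𝒰 (eval_bdd A x μ)
        simpa using h1.const_smul c }
    ‖x‖
    (fun μ => by
      have h := tendsto_ulim 𝒰 (eval_bdd A x μ)
      have : ‖ulim 𝒰 (fun i => μ (x i))‖ ≤ ‖μ‖ * ‖x‖ := by
        refine le_of_tendsto h.norm (Eventually.of_forall fun i => ?_)
        refine (μ.le_opNorm _).trans ?_
        gcongr
        exact lp.norm_apply_le_norm ENNReal.top_ne_zero x i
      simpa [mul_comm] using this)

theorem Tfun_apply (x : lp (fun _ : I => A) ∞) (μ : Dl A) :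
    Tfun 𝒰 A x μ = ulim 𝒰 (fun i => μ (x i)) := rfl

theorem Tfun_tendsto (x : lp (fun _ : I => A) ∞) (μ : Dl A) :
    Tendsto (fun i => μ (x i)) (𝒰 : Filter I) (𝓝 (Tfun 𝒰 A x μ)) := by
  rw [Tfun_apply]
  exact tendsto_ulim 𝒰 (eval_bdd A x μ)

theorem Tfun_norm_le (x : lp (fun _ : I => A) ∞) : ‖Tfun 𝒰 A x‖ ≤ ‖UPmk 𝒰 A x‖ := by
  refine ContinuousLinearMap.opNorm_le_bound _ (norm_nonneg _) (fun μ => ?_)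
  rw [mul_comm]
  refine le_of_tendsto_of_tendsto' (Tfun_tendsto 𝒰 A x μ).norm
    ((UP_norm_tendsto 𝒰 A x).const_mul ‖μ‖) (fun i => ?_)
  exact μ.le_opNorm (x i)

/-- `Tfun` as a linear map. -/
noncomputable def TfunL : lp (fun _ : I => A) ∞ →ₗ[ℂ] Dl (Dl A) where
  toFun := Tfun 𝒰 A
  map_add' x y := by
    ext μ
    rw [ContinuousLinearMap.add_apply, Tfun_apply]
    apply ulim_eq
    have h := (Tfun_tendsto 𝒰 A x μ).add (Tfun_tendsto 𝒰 A y μ)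
    refine h.congr (fun i => ?_)
    have : (x + y) i = x i + y i := by rw [lp.coeFn_add]; rfl
    rw [this, map_add]
  map_smul' c x := by
    ext μ
    rw [RingHom.id_apply, ContinuousLinearMap.smul_apply, Tfun_apply]
    apply ulim_eq
    have h := (Tfun_tendsto 𝒰 A x μ).const_smul c
    refine h.congr (fun i => ?_)
    have : (c • x) i = c • x i := by rw [lp.coeFn_smul]; rfl
    rw [this, map_smul]

theorem Tfun_zero_of_NU {x : lp (fun _ : I => A) ∞} (hx : x ∈ NU 𝒰 A) :
    Tfun 𝒰 A x = 0 := by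
  ext μ
  rw [ContinuousLinearMap.zero_apply, Tfun_apply]
  apply ulim_eq
  refine squeeze_zero_norm (fun i => (μ.le_opNorm (x i)).trans (le_of_eq (mul_comm _ _))) ?_
  simpa using (NU_mem_iff 𝒰 A |>.1 hx).mul_const ‖μ‖

end Tsec


section APmul

variable {I : Type u} (𝒰 : Ultrafilter I) (A : Type v)
  [NonUnitalNormedRing A] [NormedSpace ℂ A] [IsScalarTower ℂ A A] [SMulCommClass ℂ A A]

theorem Tfun_mul_AP (x y : lp (fun _ : I => A) ∞) {μ : Dl A}
    (hμ : IsAP (ContinuousLinearMap.mul ℂ A) μ) :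
    Tfun 𝒰 A (x * y) μ
      = arensMul1 (ContinuousLinearMap.mul ℂ A) (Tfun 𝒰 A x) (Tfun 𝒰 A y) μ := by
  set m := ContinuousLinearMap.mul ℂ A with hm
  set g : I → Dl A := fun j => lAct m (y j) μ with hg
  have hK : IsCompact (closure ((fun a => lAct m a μ) '' closedBall (0 : A) 1)) := hμ
  set R : ℂ := ((‖y‖ + 1 : ℝ) : ℂ) with hR
  have hRpos : (0:ℝ) < ‖y‖ + 1 := by positivity
  have hRne : R ≠ 0 := by
    rw [hR]
    exact_mod_cast Complex.ofReal_ne_zero.2 hRpos.ne'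
  have hRnorm : ‖R‖ = ‖y‖ + 1 := by
    rw [hR, Complex.norm_real, Real.norm_eq_abs, abs_of_pos hRpos]
  set K2 : Set (Dl A) :=
    (fun v => R • v) '' closure ((fun a => lAct m a μ) '' closedBall (0 : A) 1) with hK2def
  have hK2 : IsCompact K2 := hK.image (continuous_const_smul R)
  have hgmem : ∀ j, g j ∈ K2 := by
    intro j
    refine ⟨lAct m (R⁻¹ • y j) μ, subset_closure ⟨R⁻¹ • y j, ?_, rfl⟩, ?_⟩
    · rw [mem_closedBall, dist_zero_right, norm_smul, norm_inv, hRnorm]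
      have h1 : ‖y j‖ ≤ ‖y‖ + 1 :=
        (lp.norm_apply_le_norm ENNReal.top_ne_zero y j).trans (by linarith)
      calc (‖y‖+1)⁻¹ * ‖y j‖ ≤ (‖y‖+1)⁻¹ * (‖y‖+1) :=
            mul_le_mul_of_nonneg_left h1 (by positivity)
        _ = 1 := inv_mul_cancel₀ hRpos.ne'
    · have h2 : lAct m (R⁻¹ • y j) = R⁻¹ • lAct m (y j) := map_smul _ _ _
      show R • (lAct m (R⁻¹ • y j)) μ = g j
      rw [h2, ContinuousLinearMap.smul_apply]
      exact smul_inv_smul₀ hRne _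
  have hle : (𝒰.map g : Filter (Dl A)) ≤ 𝓟 K2 := by
    simp only [le_principal_iff, Ultrafilter.mem_coe, Ultrafilter.mem_map]
    exact 𝒰.toFilter.mem_of_superset univ_mem (fun j _ => hgmem j)
  obtain ⟨ν, -, hν'⟩ := hK2.ultrafilter_le_nhds (𝒰.map g) hle
  have hν : Tendsto g (𝒰 : Filter I) (𝓝 ν) := hν'
  have hgnorm : Tendsto (fun j => ‖g j - ν‖) (𝒰 : Filter I) (𝓝 0) :=
    tendsto_iff_norm_sub_tendsto_zero.1 hν
  have harens : arensMul1 m (Tfun 𝒰 A x) (Tfun 𝒰 A y) μ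
      = (Tfun 𝒰 A x) (arAct m (Tfun 𝒰 A y) μ) :=
    (arens_apply m (Tfun 𝒰 A x) (Tfun 𝒰 A y) μ 0 0).2.2.2.2.1
  have hνeq : arAct m (Tfun 𝒰 A y) μ = ν := by
    ext a
    have h1 : arAct m (Tfun 𝒰 A y) μ a = Tfun 𝒰 A y (rAct m a μ) :=
      (arens_apply m (Tfun 𝒰 A y) (Tfun 𝒰 A y) μ a 0).2.2.1
    have h3 : ∀ j, (rAct m a μ) (y j) = g j a := by
      intro j
      have e1 : rAct m a μ (y j) = μ (m a (y j)) :=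
        (arens_apply m (Tfun 𝒰 A y) (Tfun 𝒰 A y) μ a (y j)).1
      have e2 : g j a = μ (m a (y j)) :=
        (arens_apply m (Tfun 𝒰 A y) (Tfun 𝒰 A y) μ (y j) a).2.1
      rw [e1, e2]
    have h2 : Tendsto (fun j => g j a) (𝒰 : Filter I) (𝓝 (Tfun 𝒰 A y (rAct m a μ))) :=
      (Tfun_tendsto 𝒰 A y (rAct m a μ)).congr h3
    have h4 : Tendsto (fun j => g j a - ν a) (𝒰 : Filter I) (𝓝 0) := by
      refine squeeze_zero_norm (fun j => ?_) (by simpa using hgnorm.mul_const ‖a‖)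
      simpa using (g j - ν).le_opNorm a
    have h5 : Tendsto (fun j => g j a) (𝒰 : Filter I) (𝓝 (ν a)) := by
      have := h4.add (tendsto_const_nhds :
        Tendsto (fun _ : I => ν a) (𝒰 : Filter I) (𝓝 (ν a)))
      simpa using this
    rw [h1]
    exact tendsto_nhds_unique h2 h5
  have heq : ∀ i, μ ((x * y) i) = g i (x i) := by
    intro i
    have hc : (x * y) i = x i * y i := by rw [lp.infty_coeFn_mul]; rfl
    have e2 : g i (x i) = μ (m (x i) (y i)) :=
      (arens_apply m (Tfun 𝒰 A y) (Tfun 𝒰 A y) μ (y i) (x i)).2.1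
    rw [hc, e2]
    rfl
  have hdiff : Tendsto (fun i => g i (x i) - ν (x i)) (𝒰 : Filter I) (𝓝 0) := by
    refine squeeze_zero_norm (fun i => ?_) (by simpa using hgnorm.mul_const ‖x‖)
    have h6 : ‖(g i - ν) (x i)‖ ≤ ‖g i - ν‖ * ‖x i‖ := (g i - ν).le_opNorm (x i)
    have h7 : ‖g i - ν‖ * ‖x i‖ ≤ ‖g i - ν‖ * ‖x‖ := by
      gcongr
      exact lp.norm_apply_le_norm ENNReal.top_ne_zero x i
    simpa using h6.trans h7
  have hR2 : Tendsto (fun i => g i (x i)) (𝒰 : Filter I) (𝓝 (Tfun 𝒰 A x ν)) := by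
    have := (Tfun_tendsto 𝒰 A x ν).add hdiff
    simpa using this
  have hmain : Tfun 𝒰 A (x * y) μ = Tfun 𝒰 A x ν :=
    tendsto_nhds_unique ((Tfun_tendsto 𝒰 A (x * y) μ).congr heq) hR2
  rw [harens, hνeq, hmain]

end APmul

section Helly

variable {A : Type v} [NormedAddCommGroup A] [NormedSpace ℂ A]

theorem helly (Φ : Dl (Dl A)) (F : Finset (Dl A)) :
    ∃ a : A, ‖a‖ ≤ ‖Φ‖ + 1 ∧ ∀ μ ∈ F, μ a = Φ μ := by
  classical
  set L : {μ : Dl A // μ ∈ F} → A →ₗ[ℂ] ℂ := fun μ => ((μ : Dl A) : A →ₗ[ℂ] ℂ) with hL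
  set S : A →ₗ[ℂ] ({μ : Dl A // μ ∈ F} → ℂ) := LinearMap.pi L with hS
  set c : {μ : Dl A // μ ∈ F} → ℂ := fun μ => Φ (μ : Dl A) with hc
  have hrange : c ∈ LinearMap.range S := by
    by_contra hc'
    obtain ⟨f, hf0, hfbot⟩ :=
      (LinearMap.range S).exists_dual_map_eq_bot_of_notMem hc' inferInstance
    set lam : {μ : Dl A // μ ∈ F} → ℂ :=
      fun μ => f (fun j => if μ = j then 1 else 0) with hlam
    set ψ : Dl A := ∑ μ : {μ : Dl A // μ ∈ F}, lam μ • (μ : Dl A) with hψ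
    have hfS : ∀ a : A, f (S a) = ψ a := by
      intro a
      have hdec : S a = ∑ μ : {μ : Dl A // μ ∈ F},
          S a μ • (fun j => if μ = j then (1:ℂ) else 0) := pi_eq_sum_univ (S a)
      rw [hdec, map_sum, hψ]
      rw [ContinuousLinearMap.sum_apply]
      refine Finset.sum_congr rfl (fun μ _ => ?_)
      rw [map_smul, ContinuousLinearMap.smul_apply]
      have hSa : S a μ = (μ : Dl A) a := rfl
      rw [hSa]
      simp [hlam, smul_eq_mul, mul_comm]
    have hψ0 : ψ = (0 : Dl A) := by
      ext a
      have h1 : f (S a) ∈ Submodule.map f (LinearMap.range S) :=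
        ⟨S a, ⟨a, rfl⟩, rfl⟩
      rw [hfbot] at h1
      have h2 : f (S a) = 0 := (Submodule.mem_bot ℂ).1 h1
      rw [ContinuousLinearMap.zero_apply, ← hfS a, h2]
    have hfc : f c = 0 := by
      have hdec : c = ∑ μ : {μ : Dl A // μ ∈ F},
          c μ • (fun j => if μ = j then (1:ℂ) else 0) := pi_eq_sum_univ c
      have h3 : f c = ∑ μ : {μ : Dl A // μ ∈ F}, c μ * lam μ := by
        conv_lhs => rw [hdec]
        rw [map_sum]
        refine Finset.sum_congr rfl (fun μ _ => ?_)
        rw [map_smul, smul_eq_mul]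
      have h4 : Φ ψ = ∑ μ : {μ : Dl A // μ ∈ F}, c μ * lam μ := by
        rw [hψ, map_sum]
        refine Finset.sum_congr rfl (fun μ _ => ?_)
        rw [map_smul, smul_eq_mul, hc, mul_comm]
      rw [h3, ← h4, hψ0, map_zero]
    exact hf0 hfc
  obtain ⟨a₀, ha₀⟩ := hrange
  have ha₀' : ∀ μ : {μ : Dl A // μ ∈ F}, (μ : Dl A) a₀ = Φ (μ : Dl A) := by
    intro μ
    have := congrFun ha₀ μ
    exact this
  set V : Submodule ℂ A := ⨅ μ : {μ : Dl A // μ ∈ F}, LinearMap.ker (L μ) with hV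
  by_cases hmem : a₀ ∈ V
  · refine ⟨0, by simpa using by positivity, fun μ hμF => ?_⟩
    have h1 : a₀ ∈ LinearMap.ker (L ⟨μ, hμF⟩) := by
      exact (Submodule.mem_iInf _).1 hmem ⟨μ, hμF⟩
    have h2 : μ a₀ = 0 := h1
    rw [map_zero, ← ha₀' ⟨μ, hμF⟩]
    exact h2.symm
  · have hVc : IsClosed (V : Set A) := by
      have h1 : (V : Set A) = ⋂ μ : {μ : Dl A // μ ∈ F}, (LinearMap.ker (L μ) : Set A) := by
        rw [hV]
        simp [Submodule.coe_iInf]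
      rw [h1]
      exact isClosed_iInter (fun μ => ContinuousLinearMap.isClosed_ker (μ : Dl A))
    haveI : IsClosed (V : Set A) := hVc
    have hne : (Submodule.Quotient.mk a₀ : A ⧸ V) ≠ 0 := by
      simpa [Submodule.Quotient.mk_eq_zero] using hmem
    obtain ⟨g, hg1, hga⟩ := exists_dual_vector ℂ _ (norm_ne_zero_iff.mpr hne)
    have hψbound : ∀ a : A, ‖(g.toLinearMap ∘ₗ V.mkQ) a‖ ≤ 1 * ‖a‖ := by
      intro a
      have h1 : ‖g (Submodule.Quotient.mk a : A ⧸ V)‖ ≤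
          ‖g‖ * ‖(Submodule.Quotient.mk a : A ⧸ V)‖ := g.le_opNorm _
      rw [hg1, one_mul] at h1
      exact h1.trans (by simpa using Submodule.Quotient.norm_mk_le V a)
    set ψ : Dl A := LinearMap.mkContinuous (g.toLinearMap ∘ₗ V.mkQ) 1 hψbound with hψdef
    have hψnorm : ‖ψ‖ ≤ 1 := LinearMap.mkContinuous_norm_le _ zero_le_one _
    have hψapp : ∀ a : A, ψ a = g (Submodule.Quotient.mk a : A ⧸ V) := fun a => rfl
    have hkerle : (⨅ μ : {μ : Dl A // μ ∈ F}, LinearMap.ker (L μ)) ≤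
        LinearMap.ker (g.toLinearMap ∘ₗ V.mkQ) := by
      intro v hv
      have h1 : (Submodule.Quotient.mk v : A ⧸ V) = 0 :=
        (Submodule.Quotient.mk_eq_zero V).2 (hV ▸ hv)
      simp only [LinearMap.mem_ker, LinearMap.comp_apply]
      rw [Submodule.mkQ_apply, h1, map_zero]
    have hspan := mem_span_of_iInf_ker_le_ker hkerle
    obtain ⟨coef, hcoef⟩ := (Submodule.mem_span_range_iff_exists_fun ℂ).1 hspan
    set χ : Dl A := ∑ μ : {μ : Dl A // μ ∈ F}, coef μ • (μ : Dl A) with hχ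
    have hχψ : ∀ a : A, χ a = ψ a := by
      intro a
      have h1 : (∑ μ : {μ : Dl A // μ ∈ F}, coef μ • L μ) a
          = (g.toLinearMap ∘ₗ V.mkQ) a := by rw [hcoef]
      have h2 : χ a = (∑ μ : {μ : Dl A // μ ∈ F}, coef μ • L μ) a := by
        rw [hχ, ContinuousLinearMap.sum_apply, LinearMap.sum_apply]
        refine Finset.sum_congr rfl (fun μ _ => ?_)
        rfl
      rw [h2, h1, hψapp]
      rfl
    have hΦχ : Φ χ = ψ a₀ := by
      rw [hχ, map_sum, ← hχψ a₀, hχ, ContinuousLinearMap.sum_apply]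
      refine Finset.sum_congr rfl (fun μ _ => ?_)
      rw [map_smul, ContinuousLinearMap.smul_apply, ha₀' μ]
    have hχeq : χ = ψ := ContinuousLinearMap.ext hχψ
    have hnorm : ‖(Submodule.Quotient.mk a₀ : A ⧸ V)‖ ≤ ‖Φ‖ := by
      have h1 : ψ a₀ = ((‖(Submodule.Quotient.mk a₀ : A ⧸ V)‖ : ℝ) : ℂ) := by
        rw [hψapp]; exact hga
      have h2 : ‖(Submodule.Quotient.mk a₀ : A ⧸ V)‖ = ‖ψ a₀‖ := by
        rw [h1, Complex.norm_real, Real.norm_eq_abs, abs_of_nonneg (norm_nonneg _)]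
      rw [h2, ← hΦχ, hχeq]
      calc ‖Φ ψ‖ ≤ ‖Φ‖ * ‖ψ‖ := Φ.le_opNorm ψ
        _ ≤ ‖Φ‖ * 1 := mul_le_mul_of_nonneg_left hψnorm (norm_nonneg Φ)
        _ = ‖Φ‖ := mul_one _
    obtain ⟨m0, hm0, hm0n⟩ :=
      Submodule.Quotient.norm_mk_lt (Submodule.Quotient.mk a₀ : A ⧸ V) one_pos
    refine ⟨m0, by linarith, fun μ hμF => ?_⟩
    have hdiff : m0 - a₀ ∈ V := (Submodule.Quotient.eq V).1 hm0
    have h1 : (L ⟨μ, hμF⟩) (m0 - a₀) = 0 :=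
      (Submodule.mem_iInf _).1 (hV ▸ hdiff) ⟨μ, hμF⟩
    have h2 : μ m0 = μ a₀ := by
      have h3 : μ (m0 - a₀) = 0 := h1
      rw [map_sub] at h3
      exact sub_eq_zero.1 h3
    rw [h2]
    exact ha₀' ⟨μ, hμF⟩

end Helly

section Transfer

variable {B' : Type v} {B : Type w}
  [NonUnitalNormedRing B'] [NormedSpace ℂ B'] [IsScalarTower ℂ B' B'] [SMulCommClass ℂ B' B']
  [NonUnitalNormedRing B] [NormedSpace ℂ B] [IsScalarTower ℂ B B] [SMulCommClass ℂ B B]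

theorem amenableWith_transfer (θ : B' →L[ℂ] B)
    (hmul : ∀ u v : B', θ (u * v) = θ u * θ v) (hsurj : Function.Surjective θ)
    (h : AmenableWith.{v, y} (ContinuousLinearMap.mul ℂ B')) :
    AmenableWith.{w, y} (ContinuousLinearMap.mul ℂ B) := by
  intro X _ _ _ L R hLR D hD
  have hbimod : IsBimoduleWith (ContinuousLinearMap.mul ℂ B') (L.comp θ) (R.comp θ) := by
    refine ⟨fun a b x => ?_, fun a b x => ?_, fun a b x => hLR.2.2 (θ a) (θ b) x⟩
    · simp only [ContinuousLinearMap.comp_apply, mul_apply', hmul]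
      exact hLR.1 (θ a) (θ b) x
    · simp only [ContinuousLinearMap.comp_apply, mul_apply', hmul]
      exact hLR.2.1 (θ a) (θ b) x
  have hD' : ∀ a b : B', (D.comp θ) ((ContinuousLinearMap.mul ℂ B') a b)
      = ((D.comp θ) b).comp ((R.comp θ) a) + ((D.comp θ) a).comp ((L.comp θ) b) := by
    intro a b
    simp only [ContinuousLinearMap.comp_apply, mul_apply', hmul]
    have := hD (θ a) (θ b)
    simp only [mul_apply'] at this
    rw [this]
  obtain ⟨lam, hlam⟩ := h X (L.comp θ) (R.comp θ) hbimod (D.comp θ) hD'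
  refine ⟨lam, fun b => ?_⟩
  obtain ⟨u, rfl⟩ := hsurj b
  simpa using hlam u

end Transfer

/-- Let `𝒜` be an ultra-amenable Banach algebra.  Then the Banach
algebra `AP(𝒜')'` is amenable.  Here `AP(𝒜')'` is realised as a Banach algebra `B`
together with the restriction map `q : 𝒜'' → B = AP(𝒜')'` (which is surjective by the
Hahn–Banach theorem): `q` is multiplicative for the Arens product, its kernel is the
annihilator of `AP(𝒜')`, and it is a quotient map of norms, so that `B` carries the
product induced from the Arens product on `𝒜''`. -/
theorem ap_dual_amenable_of_ultraAmenable
    {A : Type u}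
    [NonUnitalNormedRing A] [NormedSpace ℂ A] [IsScalarTower ℂ A A] [SMulCommClass ℂ A A]
    [CompleteSpace A]
    (hA : UltraAmenable A)
    {B : Type u}
    [NonUnitalNormedRing B] [NormedSpace ℂ B] [IsScalarTower ℂ B B] [SMulCommClass ℂ B B]
    [CompleteSpace B]
    (q : Dl (Dl A) →ₗ[ℂ] B)
    (hqmul : ∀ Φ Ψ : Dl (Dl A),
      q (arensMul1 (ContinuousLinearMap.mul ℂ A) Φ Ψ) = q Φ * q Ψ)
    (hqsurj : Function.Surjective q)
    (hker : ∀ Φ : Dl (Dl A),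
      q Φ = 0 ↔ ∀ μ : Dl A, IsAP (ContinuousLinearMap.mul ℂ A) μ → Φ μ = 0)
    (hqnorm : ∀ Φ : Dl (Dl A), ‖q Φ‖ =
      Metric.infDist Φ {Ψ : Dl (Dl A) | ∀ μ : Dl A,
        IsAP (ContinuousLinearMap.mul ℂ A) μ → Ψ μ = 0}) :
    Amenable B := by
  classical
  letI : NeBot (atTop : Filter (Finset (Dl A))) := atTop_neBot
  set 𝒰 : Ultrafilter (Finset (Dl A)) := Ultrafilter.of atTop with h𝒰
  set m := ContinuousLinearMap.mul ℂ A with hm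
  -- q is bounded by 1
  have hqbdd : ∀ Ψ : Dl (Dl A), ‖q Ψ‖ ≤ ‖Ψ‖ := by
    intro Ψ
    rw [hqnorm]
    have h0 : (0 : Dl (Dl A)) ∈ {Ψ' : Dl (Dl A) | ∀ μ : Dl A, IsAP m μ → Ψ' μ = 0} :=
      fun μ _ => rfl
    have := Metric.infDist_le_dist_of_mem (x := Ψ) h0
    rwa [dist_zero_right] at this
  -- the map θ₀ = q ∘ T
  set θ₀ : lp (fun _ : Finset (Dl A) => A) ∞ →ₗ[ℂ] B := q ∘ₗ TfunL 𝒰 A with hθ₀def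
  have hθ₀ : ∀ x, θ₀ x = q (Tfun 𝒰 A x) := fun x => rfl
  have hNUker : NU 𝒰 A ≤ LinearMap.ker θ₀ := by
    intro x hx
    rw [LinearMap.mem_ker, hθ₀]
    rw [Tfun_zero_of_NU 𝒰 A hx, map_zero]
  set θₗ : UP 𝒰 A →ₗ[ℂ] B := (NU 𝒰 A).liftQ θ₀ hNUker with hθₗdef
  have hθₗ : ∀ x, θₗ (UPmk 𝒰 A x) = q (Tfun 𝒰 A x) := fun x => rfl
  have hθbound : ∀ u : UP 𝒰 A, ‖θₗ u‖ ≤ 1 * ‖u‖ := by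
    intro u
    obtain ⟨x, rfl⟩ := UPmk_surjective 𝒰 A u
    rw [hθₗ, one_mul]
    exact (hqbdd _).trans (Tfun_norm_le 𝒰 A x)
  set θ : UP 𝒰 A →L[ℂ] B := LinearMap.mkContinuous θₗ 1 hθbound with hθdef
  have hθ : ∀ x, θ (UPmk 𝒰 A x) = q (Tfun 𝒰 A x) := fun x => hθₗ x
  -- θ is multiplicative
  have hTm : ∀ x y, q (Tfun 𝒰 A (x * y)) = q (Tfun 𝒰 A x) * q (Tfun 𝒰 A y) := by
    intro x y
    have h1 : q (Tfun 𝒰 A (x * y) - arensMul1 m (Tfun 𝒰 A x) (Tfun 𝒰 A y)) = 0 := by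
      refine (hker _).2 (fun μ hμ => ?_)
      rw [ContinuousLinearMap.sub_apply, Tfun_mul_AP 𝒰 A x y hμ, sub_self]
    rw [map_sub, sub_eq_zero] at h1
    rw [h1, hqmul]
  have hθmul : ∀ u v : UP 𝒰 A, θ (u * v) = θ u * θ v := by
    intro u v
    obtain ⟨x, rfl⟩ := UPmk_surjective 𝒰 A u
    obtain ⟨y, rfl⟩ := UPmk_surjective 𝒰 A v
    rw [← UPmk_mul, hθ, hθ, hθ, hTm]
  -- θ is surjective
  have hθsurj : Function.Surjective θ := by
    intro b
    obtain ⟨Φ, rfl⟩ := hqsurj b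
    have hxfb : ∀ F, ‖(helly Φ F).choose‖ ≤ ‖Φ‖ + 1 := fun F => (helly Φ F).choose_spec.1
    have hxfe : ∀ F, ∀ μ ∈ F, μ (helly Φ F).choose = Φ μ := fun F => (helly Φ F).choose_spec.2
    have hmem : Memℓp (fun F => (helly Φ F).choose : ∀ _ : Finset (Dl A), A) ∞ :=
      memℓp_infty ⟨‖Φ‖ + 1, by rintro - ⟨F, rfl⟩; exact hxfb F⟩
    set X : lp (fun _ : Finset (Dl A) => A) ∞ := ⟨fun F => (helly Φ F).choose, hmem⟩ with hX
    have hTX : Tfun 𝒰 A X = Φ := by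
      ext μ
      rw [Tfun_apply]
      apply ulim_eq
      have hev : ∀ᶠ F in (atTop : Filter (Finset (Dl A))), μ (X F) = Φ μ := by
        filter_upwards [Filter.eventually_ge_atTop ({μ} : Finset (Dl A))] with F hF
        exact hxfe F μ (Finset.singleton_subset_iff.1 hF)
      have hev' : ∀ᶠ F in (𝒰 : Filter (Finset (Dl A))), μ (X F) = Φ μ :=
        (Ultrafilter.of_le atTop) hev
      exact Tendsto.congr' (by filter_upwards [hev'] with F h; exact h.symm) tendsto_const_nhds
    exact ⟨UPmk 𝒰 A X, by rw [hθ, hTX]⟩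
  -- conclude
  have hUP : Amenable (UP 𝒰 A) :=
    hA (Finset (Dl A)) 𝒰 (UP 𝒰 A) (UPmk 𝒰 A)
      ⟨⟨UPmk_surjective 𝒰 A, UP_norm_tendsto 𝒰 A⟩, UPmk_mul 𝒰 A⟩
  exact amenableWith_transfer θ hθmul hθsurj hUP

end UPaper
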